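/- Let p be an odd prime. Define ψ : (ZMod p)³ → ZMod p by choosing integer representatives x̄, ȳ, z̄ of x, y, z and setting ψ(x,y,z) to be the image in ZMod p of the integer (x̄ − ȳ)·(((2·z̄^p − ȳ^p) − (2·z̄ − ȳ)^p)/p), where the division by p is exact. Then ψ is a quandle 3-cocycle of the dihedral quandle R_p (ZMod p with i ▷ j = 2j − i): ψ(x,z,w) − ψ(x,y,w) + ψ(x,y,z) − ψ(x▷y, z, w) + ψ(x▷z, y▷z, w) − ψ(x▷w, y▷w, z▷w) = 0 for all x, y, z, w ∈ ZMod p, and ψ(x,x,y) = 0 = ψ(x,y,y) for all x, y ∈ ZMod p. -/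
import Mathlib

/-- Mochizuki's 3-cocycle `ψ(x,y,z) = (x - y) * ((2z^p - y^p) - (2z - y)^p) / p` of the
dihedral quandle `R_p`, computed from the integer representatives given by `ZMod.val`
(the division by `p` is exact). -/
def mochizukiCocycle (p : ℕ) (x y z : ZMod p) : ZMod p :=
  ((((x.val : ℤ) - (y.val : ℤ)) *
      (((2 * (z.val : ℤ) ^ p - (y.val : ℤ) ^ p) -
          (2 * (z.val : ℤ) - (y.val : ℤ)) ^ p) / (p : ℤ)) : ℤ) : ZMod p)

/-- The numerator `(2z^p - y^p) - (2z - y)^p` of Mochizuki's cocycle, over `ℤ`. -/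
private def mochiF (p : ℕ) (Y Z : ℤ) : ℤ := (2 * Z ^ p - Y ^ p) - (2 * Z - Y) ^ p

private lemma mochiF_dvd (p : ℕ) (hp : p.Prime) (Y Z : ℤ) : (p : ℤ) ∣ mochiF p Y Z := by
  haveI : Fact p.Prime := ⟨hp⟩
  rw [← ZMod.intCast_zmod_eq_zero_iff_dvd]
  push_cast [mochiF]
  rw [ZMod.pow_card, ZMod.pow_card, ZMod.pow_card]
  ring

private lemma pow_congr_sq (p : ℕ) {a b : ℤ} (h : (p : ℤ) ∣ a - b) :
    ((p : ℤ)^2) ∣ a ^ p - b ^ p := by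
  simpa using dvd_sub_pow_of_dvd_sub h 1

private lemma mochiF_congr (p : ℕ) {Y Z Y' Z' : ℤ} (hY : (p : ℤ) ∣ Y - Y')
    (hZ : (p : ℤ) ∣ Z - Z') : ((p : ℤ)^2) ∣ mochiF p Y Z - mochiF p Y' Z' := by
  have h1 := pow_congr_sq p hZ
  have h2 := pow_congr_sq p hY
  have h3 : (p : ℤ) ∣ (2 * Z - Y) - (2 * Z' - Y') := by
    have h := dvd_sub (Dvd.dvd.mul_left hZ 2) hY
    have e : 2 * (Z - Z') - (Y - Y') = (2 * Z - Y) - (2 * Z' - Y') := by ring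
    rwa [e] at h
  have h4 := pow_congr_sq p h3
  have e : mochiF p Y Z - mochiF p Y' Z' =
      2 * (Z ^ p - Z' ^ p) - (Y ^ p - Y' ^ p) - ((2 * Z - Y) ^ p - (2 * Z' - Y') ^ p) := by
    unfold mochiF; ring
  rw [e]
  exact dvd_sub (dvd_sub (Dvd.dvd.mul_left h1 2) h2) h4

/-- Well-definedness: the cocycle can be computed from any integer lifts. -/
private lemma mochizukiCocycle_eq (p : ℕ) (hp : p.Prime) (x y z : ZMod p) (X Y Z : ℤ)
    (hX : (X : ZMod p) = x) (hY : (Y : ZMod p) = y) (hZ : (Z : ZMod p) = z) :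
    ((((x.val : ℤ) - (y.val : ℤ)) *
      (((2 * (z.val : ℤ) ^ p - (y.val : ℤ) ^ p) -
          (2 * (z.val : ℤ) - (y.val : ℤ)) ^ p) / (p : ℤ)) : ℤ) : ZMod p)
      = (((X - Y) * (mochiF p Y Z / (p : ℤ)) : ℤ) : ZMod p) := by
  haveI : Fact p.Prime := ⟨hp⟩
  haveI : NeZero p := ⟨hp.ne_zero⟩
  have hp0 : (p : ℤ) ≠ 0 := by exact_mod_cast hp.ne_zero
  set Xv : ℤ := (x.val : ℤ)
  set Yv : ℤ := (y.val : ℤ)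
  set Zv : ℤ := (z.val : ℤ)
  have hXv : ((Xv : ℤ) : ZMod p) = x := by simp [Xv]
  have hYv : ((Yv : ℤ) : ZMod p) = y := by simp [Yv]
  have hZv : ((Zv : ℤ) : ZMod p) = z := by simp [Zv]
  -- divisibility of the lift differences
  have dX : (p : ℤ) ∣ X - Xv := by
    rw [← ZMod.intCast_zmod_eq_zero_iff_dvd]
    push_cast
    rw [hX, hXv]; ring
  have dY : (p : ℤ) ∣ Y - Yv := by
    rw [← ZMod.intCast_zmod_eq_zero_iff_dvd]
    push_cast
    rw [hY, hYv]; ring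
  have dZ : (p : ℤ) ∣ Z - Zv := by
    rw [← ZMod.intCast_zmod_eq_zero_iff_dvd]
    push_cast
    rw [hZ, hZv]; ring
  -- exact divisions
  obtain ⟨f1, hf1⟩ := mochiF_dvd p hp Yv Zv
  obtain ⟨f2, hf2⟩ := mochiF_dvd p hp Y Z
  have hdf : (p : ℤ) ∣ f1 - f2 := by
    have h2 : ((p : ℤ)^2) ∣ mochiF p Yv Zv - mochiF p Y Z :=
      mochiF_congr p (dvd_sub_comm.mp dY) (dvd_sub_comm.mp dZ)
    have : (p : ℤ) * (p : ℤ) ∣ (p : ℤ) * (f1 - f2) := by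
      rw [mul_sub, ← hf1, ← hf2, ← sq]; exact h2
    exact (mul_dvd_mul_iff_left hp0).mp this
  have e1 : mochiF p Yv Zv / (p : ℤ) = f1 := by rw [hf1, Int.mul_ediv_cancel_left _ hp0]
  have e2 : mochiF p Y Z / (p : ℤ) = f2 := by rw [hf2, Int.mul_ediv_cancel_left _ hp0]
  have hmatch : ((2 * Zv ^ p - Yv ^ p) - (2 * Zv - Yv) ^ p) = mochiF p Yv Zv := rfl
  rw [hmatch, e1, e2]
  -- now reduce to a mod-p statement
  rw [ZMod.intCast_eq_intCast_iff]
  have key : (p : ℤ) ∣ (Xv - Yv) * f1 - (X - Y) * f2 := by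
    have : (Xv - Yv) * f1 - (X - Y) * f2
        = (Xv - Yv) * (f1 - f2) - ((X - Xv) - (Y - Yv)) * f2 := by ring
    rw [this]
    exact dvd_sub (Dvd.dvd.mul_left hdf _) (Dvd.dvd.mul_right (dvd_sub dX dY) _)
  exact (Int.modEq_iff_dvd).mpr (by simpa using (dvd_sub_comm.mp key))

theorem mochizuki_is_three_cocycle (p : ℕ) (hp : p.Prime) (hodd : Odd p) :
    (∀ x y z w : ZMod p,
      mochizukiCocycle p x z w - mochizukiCocycle p x y w + mochizukiCocycle p x y z
        - mochizukiCocycle p (2 * y - x) z w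
        + mochizukiCocycle p (2 * z - x) (2 * z - y) w
        - mochizukiCocycle p (2 * w - x) (2 * w - y) (2 * w - z) = 0) ∧
    (∀ x y : ZMod p, mochizukiCocycle p x x y = 0 ∧ mochizukiCocycle p x y y = 0) := by
  haveI : Fact p.Prime := ⟨hp⟩
  haveI : NeZero p := ⟨hp.ne_zero⟩
  have hp0 : (p : ℤ) ≠ 0 := by exact_mod_cast hp.ne_zero
  constructor
  · intro x y z w
    set X : ℤ := (x.val : ℤ)
    set Y : ℤ := (y.val : ℤ)
    set Z : ℤ := (z.val : ℤ)
    set W : ℤ := (w.val : ℤ)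
    have hX : ((X : ℤ) : ZMod p) = x := by simp [X]
    have hY : ((Y : ℤ) : ZMod p) = y := by simp [Y]
    have hZ : ((Z : ℤ) : ZMod p) = z := by simp [Z]
    have hW : ((W : ℤ) : ZMod p) = w := by simp [W]
    have t1 : mochizukiCocycle p x z w
        = (((X - Z) * (mochiF p Z W / (p : ℤ)) : ℤ) : ZMod p) :=
      mochizukiCocycle_eq p hp x z w X Z W hX hZ hW
    have t2 : mochizukiCocycle p x y w
        = (((X - Y) * (mochiF p Y W / (p : ℤ)) : ℤ) : ZMod p) :=
      mochizukiCocycle_eq p hp x y w X Y W hX hY hW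
    have t3 : mochizukiCocycle p x y z
        = (((X - Y) * (mochiF p Y Z / (p : ℤ)) : ℤ) : ZMod p) :=
      mochizukiCocycle_eq p hp x y z X Y Z hX hY hZ
    have t4 : mochizukiCocycle p (2 * y - x) z w
        = ((((2*Y - X) - Z) * (mochiF p Z W / (p : ℤ)) : ℤ) : ZMod p) :=
      mochizukiCocycle_eq p hp (2 * y - x) z w (2*Y - X) Z W
        (by push_cast; rw [hX, hY]) hZ hW
    have t5 : mochizukiCocycle p (2 * z - x) (2 * z - y) w
        = ((((2*Z - X) - (2*Z - Y)) * (mochiF p (2*Z - Y) W / (p : ℤ)) : ℤ) : ZMod p) :=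
      mochizukiCocycle_eq p hp (2 * z - x) (2 * z - y) w (2*Z - X) (2*Z - Y) W
        (by push_cast; rw [hX, hZ]) (by push_cast; rw [hY, hZ]) hW
    have t6 : mochizukiCocycle p (2 * w - x) (2 * w - y) (2 * w - z)
        = ((((2*W - X) - (2*W - Y)) * (mochiF p (2*W - Y) (2*W - Z) / (p : ℤ)) : ℤ) : ZMod p) :=
      mochizukiCocycle_eq p hp (2 * w - x) (2 * w - y) (2 * w - z)
        (2*W - X) (2*W - Y) (2*W - Z)
        (by push_cast; rw [hX, hW]) (by push_cast; rw [hY, hW]) (by push_cast; rw [hZ, hW])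
    rw [t1, t2, t3, t4, t5, t6]
    obtain ⟨g1, hg1⟩ := mochiF_dvd p hp Z W
    obtain ⟨g2, hg2⟩ := mochiF_dvd p hp Y W
    obtain ⟨g3, hg3⟩ := mochiF_dvd p hp Y Z
    obtain ⟨g4, hg4⟩ := mochiF_dvd p hp (2*Z - Y) W
    obtain ⟨g5, hg5⟩ := mochiF_dvd p hp (2*W - Y) (2*W - Z)
    have e1 : mochiF p Z W / (p : ℤ) = g1 := by rw [hg1, Int.mul_ediv_cancel_left _ hp0]
    have e2 : mochiF p Y W / (p : ℤ) = g2 := by rw [hg2, Int.mul_ediv_cancel_left _ hp0]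
    have e3 : mochiF p Y Z / (p : ℤ) = g3 := by rw [hg3, Int.mul_ediv_cancel_left _ hp0]
    have e4 : mochiF p (2*Z - Y) W / (p : ℤ) = g4 := by
      rw [hg4, Int.mul_ediv_cancel_left _ hp0]
    have e5 : mochiF p (2*W - Y) (2*W - Z) / (p : ℤ) = g5 := by
      rw [hg5, Int.mul_ediv_cancel_left _ hp0]
    rw [e1, e2, e3, e4, e5]
    -- the integer combination is zero
    have hzero : (X - Z) * g1 - (X - Y) * g2 + (X - Y) * g3
        - ((2*Y - X) - Z) * g1 + ((2*Z - X) - (2*Z - Y)) * g4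
        - ((2*W - X) - (2*W - Y)) * g5 = 0 := by
      have hmul : (p : ℤ) * ((X - Z) * g1 - (X - Y) * g2 + (X - Y) * g3
          - ((2*Y - X) - Z) * g1 + ((2*Z - X) - (2*Z - Y)) * g4
          - ((2*W - X) - (2*W - Y)) * g5)
          = (X - Z) * mochiF p Z W - (X - Y) * mochiF p Y W + (X - Y) * mochiF p Y Z
            - ((2*Y - X) - Z) * mochiF p Z W
            + ((2*Z - X) - (2*Z - Y)) * mochiF p (2*Z - Y) W
            - ((2*W - X) - (2*W - Y)) * mochiF p (2*W - Y) (2*W - Z) := by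
        rw [hg1, hg2, hg3, hg4, hg5]; ring
      have hiden : (X - Z) * mochiF p Z W - (X - Y) * mochiF p Y W + (X - Y) * mochiF p Y Z
          - ((2*Y - X) - Z) * mochiF p Z W
          + ((2*Z - X) - (2*Z - Y)) * mochiF p (2*Z - Y) W
          - ((2*W - X) - (2*W - Y)) * mochiF p (2*W - Y) (2*W - Z) = 0 := by
        unfold mochiF; ring
      have := hmul.trans hiden
      exact (mul_eq_zero.mp this).resolve_left hp0
    have := congrArg (fun n : ℤ => (n : ZMod p)) hzero
    push_cast at this ⊢
    linear_combination this
  · intro x y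
    constructor
    · unfold mochizukiCocycle
      simp
    · unfold mochizukiCocycle
      have h : (2 * ((y.val : ℤ)) ^ p - (y.val : ℤ) ^ p) -
          (2 * (y.val : ℤ) - (y.val : ℤ)) ^ p = 0 := by ring
      rw [h]
      simp
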